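/- Suppose the l-th diagonal entry [A_{jk}]_{ll} is strictly positive for all users j, k and all streams l = 1,…,L_j, and let P_max > 0. Let F be the set of power allocations p with p_{kl} ≥ 0 for all k, l and Σ_{k=1}^K Σ_{l=1}^{L_k} p_{kl} ≤ P_max. If p* ∈ F attains the maximum over F of min_{1≤k≤K} SINR̄_k(p)/γ_k, then all users achieve the same SINR-to-target ratio: there exists a real C ≥ 0 such that SINR̄_k(p*)/γ_k = C for every k = 1,…,K. -/

import Mathlib

open Matrix Finset

noncomputable def Amat {K M : ℕ} {N L : Fin K → ℕ}
    (H : ∀ k : Fin K, Matrix (Fin M) (Fin (N k)) ℂ)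
    (U : ∀ j : Fin K, Matrix (Fin M) (Fin (L j)) ℂ)
    (V : ∀ k : Fin K, Matrix (Fin (N k)) (Fin (L k)) ℂ)
    (j k : Fin K) : Matrix (Fin (L j)) (Fin (L j)) ℂ :=
  (U j)ᴴ * H k * V k * (V k)ᴴ * (H k)ᴴ * U j

/-- The real diagonal entry `[A_{jk}]_{ll}`. -/
noncomputable def Adiag {K M : ℕ} {N L : Fin K → ℕ}
    (H : ∀ k : Fin K, Matrix (Fin M) (Fin (N k)) ℂ)
    (U : ∀ j : Fin K, Matrix (Fin M) (Fin (L j)) ℂ)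
    (V : ∀ k : Fin K, Matrix (Fin (N k)) (Fin (L k)) ℂ)
    (j k : Fin K) (l : Fin (L j)) : ℝ :=
  (Amat H U V j k l l).re

/-- The average downlink SINR of user `k` under power allocation `p`. -/
noncomputable def avgSINR {K M : ℕ} {N L : Fin K → ℕ}
    (H : ∀ k : Fin K, Matrix (Fin M) (Fin (N k)) ℂ)
    (U : ∀ j : Fin K, Matrix (Fin M) (Fin (L j)) ℂ)
    (V : ∀ k : Fin K, Matrix (Fin (N k)) (Fin (L k)) ℂ)
    (σsq : ℝ) (p : ∀ k : Fin K, Fin (L k) → ℝ) (k : Fin K) : ℝ :=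
  (∑ l, p k l * Adiag H U V k k l) /
    ((∑ j ∈ univ.erase k, ∑ l, p j l * Adiag H U V j k l) + (L k : ℝ) * σsq)

/-- SINR balancing at the optimum of Problem Pr. -/
theorem sinr_balancing_of_max_min {K M : ℕ} {N L : Fin K → ℕ}
    (hK : 0 < K) (hL : ∀ k, 1 ≤ L k)
    (H : ∀ k : Fin K, Matrix (Fin M) (Fin (N k)) ℂ)
    (U : ∀ j : Fin K, Matrix (Fin M) (Fin (L j)) ℂ)
    (V : ∀ k : Fin K, Matrix (Fin (N k)) (Fin (L k)) ℂ)
    (σsq : ℝ) (hσ : 0 < σsq)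
    (γ : Fin K → ℝ) (hγ : ∀ k, 0 < γ k)
    (hA : ∀ j k : Fin K, ∀ l : Fin (L j), 0 < Adiag H U V j k l)
    (Pmax : ℝ) (hP : 0 < Pmax)
    (pstar : ∀ k : Fin K, Fin (L k) → ℝ)
    (hstar_nonneg : ∀ k l, 0 ≤ pstar k l)
    (hstar_sum : ∑ k, ∑ l, pstar k l ≤ Pmax)
    (hopt : ∀ p : ∀ k : Fin K, Fin (L k) → ℝ, (∀ k l, 0 ≤ p k l) →
      (∑ k, ∑ l, p k l ≤ Pmax) →
      univ.inf' (Finset.univ_nonempty_iff.mpr (Fin.pos_iff_nonempty.mp hK))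
        (fun k => avgSINR H U V σsq p k / γ k) ≤
      univ.inf' (Finset.univ_nonempty_iff.mpr (Fin.pos_iff_nonempty.mp hK))
        (fun k => avgSINR H U V σsq pstar k / γ k)) :
    ∃ C : ℝ, 0 ≤ C ∧ ∀ k : Fin K, avgSINR H U V σsq pstar k / γ k = C := by
  classical
  have hne : (univ : Finset (Fin K)).Nonempty :=
    Finset.univ_nonempty_iff.mpr (Fin.pos_iff_nonempty.mp hK)
  have hLpos : ∀ k : Fin K, (0:ℝ) < (L k : ℝ) := fun k => by exact_mod_cast hL k
  have hLne : ∀ k : Fin K, (univ : Finset (Fin (L k))).Nonempty := fun k =>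
    Finset.univ_nonempty_iff.mpr (Fin.pos_iff_nonempty.mp (hL k))
  -- local names
  set Num : (∀ k : Fin K, Fin (L k) → ℝ) → Fin K → ℝ :=
    fun p k => ∑ l, p k l * Adiag H U V k k l with hNumdef
  set Den : (∀ k : Fin K, Fin (L k) → ℝ) → Fin K → ℝ :=
    fun p k => (∑ j ∈ univ.erase k, ∑ l, p j l * Adiag H U V j k l) + (L k : ℝ) * σsq
    with hDendef
  have hSINR : ∀ (p : ∀ k : Fin K, Fin (L k) → ℝ) (k : Fin K),
      avgSINR H U V σsq p k = Num p k / Den p k := fun p k => rfl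
  have hDenpos : ∀ (p : ∀ k : Fin K, Fin (L k) → ℝ), (∀ k l, 0 ≤ p k l) →
      ∀ k, 0 < Den p k := by
    intro p hp k
    have h1 : 0 ≤ ∑ j ∈ univ.erase k, ∑ l, p j l * Adiag H U V j k l :=
      Finset.sum_nonneg fun j _ => Finset.sum_nonneg fun l _ =>
        mul_nonneg (hp j l) (hA j k l).le
    have h2 : 0 < (L k : ℝ) * σsq := mul_pos (hLpos k) hσ
    simp only [hDendef]
    linarith
  set m : ℝ := univ.inf' hne (fun k => avgSINR H U V σsq pstar k / γ k) with hmdef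
  -- m is positive: compare with uniform power allocation
  have hLsum : (0:ℝ) < ∑ k : Fin K, (L k : ℝ) :=
    Finset.sum_pos (fun k _ => hLpos k) hne
  have hmpos : 0 < m := by
    set c : ℝ := Pmax / (∑ k : Fin K, (L k : ℝ)) with hcdef
    have hcpos : 0 < c := div_pos hP hLsum
    set p0 : ∀ k : Fin K, Fin (L k) → ℝ := fun _ _ => c with hp0
    have hp0nn : ∀ k l, 0 ≤ p0 k l := fun k l => hcpos.le
    have hp0sum : ∑ k, ∑ l, p0 k l ≤ Pmax := by
      have : ∑ k : Fin K, ∑ _l : Fin (L k), c = (∑ k : Fin K, (L k : ℝ)) * c := by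
        simp [Finset.sum_const, Finset.card_univ, Finset.sum_mul, mul_comm]
      rw [hp0]
      rw [this, hcdef, mul_div_cancel₀ _ (ne_of_gt hLsum)]
    have hlow : ∀ k : Fin K, 0 < avgSINR H U V σsq p0 k / γ k := by
      intro k
      have hnum : 0 < Num p0 k :=
        Finset.sum_pos (fun l _ => mul_pos hcpos (hA k k l)) (hLne k)
      exact div_pos (by rw [hSINR]; exact div_pos hnum (hDenpos p0 hp0nn k)) (hγ k)
    have h1 : 0 < univ.inf' hne (fun k => avgSINR H U V σsq p0 k / γ k) :=
      (Finset.lt_inf'_iff hne).mpr fun k _ => hlow k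
    exact lt_of_lt_of_le h1 (hopt p0 hp0nn hp0sum)
  have hge : ∀ k : Fin K, m ≤ avgSINR H U V σsq pstar k / γ k := fun k =>
    Finset.inf'_le _ (mem_univ k)
  -- each user has positive numerator at pstar
  have hNumpos : ∀ k : Fin K, 0 < Num pstar k := by
    intro k
    have h1 : 0 < avgSINR H U V σsq pstar k / γ k := lt_of_lt_of_le hmpos (hge k)
    have h2 : 0 < avgSINR H U V σsq pstar k := by
      by_contra h
      push_neg at h
      have := div_nonpos_of_nonpos_of_nonneg h (hγ k).le
      linarith
    rw [hSINR] at h2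
    by_contra h
    push_neg at h
    have := div_nonpos_of_nonpos_of_nonneg h (hDenpos pstar hstar_nonneg k).le
    linarith
  have hpexists : ∀ k : Fin K, ∃ l, 0 < pstar k l := by
    intro k
    by_contra h
    push_neg at h
    have : Num pstar k = 0 := by
      apply Finset.sum_eq_zero
      intro l _
      have : pstar k l = 0 := le_antisymm (h l) (hstar_nonneg k l)
      simp [this]
    exact absurd this (ne_of_gt (hNumpos k))
  refine ⟨m, hmpos.le, ?_⟩
  by_contra hcon
  push_neg at hcon
  obtain ⟨k0, hk0⟩ := hcon
  have hk0gt : m < avgSINR H U V σsq pstar k0 / γ k0 := lt_of_le_of_ne (hge k0) (Ne.symm hk0)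
  -- the set of users strictly above the min
  set T : Finset (Fin K) := univ.filter (fun k => m < avgSINR H U V σsq pstar k / γ k)
    with hTdef
  have hTne : T.Nonempty := ⟨k0, by simp [hTdef, hk0gt]⟩
  set r : ℝ := T.inf' hTne (fun k => avgSINR H U V σsq pstar k / γ k) with hrdef
  have hmr : m < r :=
    (Finset.lt_inf'_iff hTne).mpr fun k hk => (Finset.mem_filter.mp hk).2
  have hrpos : 0 < r := lt_trans hmpos hmr
  set t : ℝ := (m / r + 1) / 2 with htdef
  have hmr1 : m / r < 1 := (div_lt_one hrpos).mpr hmr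
  have ht0 : 0 < t := by
    have : 0 < m / r := div_pos hmpos hrpos
    rw [htdef]; linarith
  have ht1 : t < 1 := by rw [htdef]; linarith
  have htr : m < t * r := by
    have : t * r = (m + r) / 2 := by
      rw [htdef]
      field_simp
      try ring
    rw [this]; linarith
  -- modified power allocation
  set p' : ∀ k : Fin K, Fin (L k) → ℝ :=
    fun k l => if k ∈ T then t * pstar k l else pstar k l with hp'def
  have hp'nn : ∀ k l, 0 ≤ p' k l := by
    intro k l
    simp only [hp'def]
    split
    · exact mul_nonneg ht0.le (hstar_nonneg k l)
    · exact hstar_nonneg k l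
  have hp'le : ∀ k l, p' k l ≤ pstar k l := by
    intro k l
    simp only [hp'def]
    split
    · exact mul_le_of_le_one_left (hstar_nonneg k l) ht1.le
    · exact le_rfl
  have hp'sum : ∑ k, ∑ l, p' k l ≤ Pmax :=
    le_trans (Finset.sum_le_sum fun k _ => Finset.sum_le_sum fun l _ => hp'le k l) hstar_sum
  -- denominators only decrease
  have hDenle : ∀ k, Den p' k ≤ Den pstar k := by
    intro k
    simp only [hDendef]
    have : (∑ j ∈ univ.erase k, ∑ l, p' j l * Adiag H U V j k l) ≤
        ∑ j ∈ univ.erase k, ∑ l, pstar j l * Adiag H U V j k l :=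
      Finset.sum_le_sum fun j _ => Finset.sum_le_sum fun l _ =>
        mul_le_mul_of_nonneg_right (hp'le j l) (hA j k l).le
    linarith
  -- every ratio strictly exceeds m at p'
  have hkey : ∀ k : Fin K, m < avgSINR H U V σsq p' k / γ k := by
    intro k
    by_cases hk : k ∈ T
    · -- user above the min: its numerator scales by t
      have hnum' : Num p' k = t * Num pstar k := by
        simp only [hNumdef, hp'def, if_pos hk, Finset.mul_sum, mul_assoc]
      have hrk : r ≤ avgSINR H U V σsq pstar k / γ k :=
        Finset.inf'_le _ hk
      have h1 : t * Num pstar k / Den pstar k ≤ t * Num pstar k / Den p' k :=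
        div_le_div_of_nonneg_left (mul_nonneg ht0.le (hNumpos k).le)
          (hDenpos p' hp'nn k) (hDenle k)
      have h2 : t * (avgSINR H U V σsq pstar k / γ k) ≤ avgSINR H U V σsq p' k / γ k := by
        rw [hSINR, hSINR, hnum']
        have : t * (Num pstar k / Den pstar k / γ k) = t * Num pstar k / Den pstar k / γ k := by
          ring
        rw [this]
        exact (div_le_div_iff_of_pos_right (hγ k)).mpr h1
      have h3 : t * r ≤ t * (avgSINR H U V σsq pstar k / γ k) :=
        mul_le_mul_of_nonneg_left hrk ht0.le
      linarith
    · -- user at the min: its denominator strictly decreases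
      have hknotT : ¬ m < avgSINR H U V σsq pstar k / γ k := by
        intro hlt
        exact hk (Finset.mem_filter.mpr ⟨mem_univ k, hlt⟩)
      have hkeq : avgSINR H U V σsq pstar k / γ k = m :=
        le_antisymm (not_lt.mp hknotT) (hge k)
      have hnum' : Num p' k = Num pstar k := by
        simp only [hNumdef, hp'def, if_neg hk]
      have hk0ne : k0 ≠ k := by
        intro h
        exact hk (h ▸ (Finset.mem_filter.mpr ⟨mem_univ k0, hk0gt⟩))
      have hk0mem : k0 ∈ univ.erase k := Finset.mem_erase.mpr ⟨hk0ne, mem_univ k0⟩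
      have hinnerpos : 0 < ∑ l, pstar k0 l * Adiag H U V k0 k l := by
        obtain ⟨l0, hl0⟩ := hpexists k0
        exact Finset.sum_pos' (fun l _ => mul_nonneg (hstar_nonneg k0 l) (hA k0 k l).le)
          ⟨l0, mem_univ l0, mul_pos hl0 (hA k0 k l0)⟩
      have hDenlt : Den p' k < Den pstar k := by
        simp only [hDendef]
        have hstrict : (∑ j ∈ univ.erase k, ∑ l, p' j l * Adiag H U V j k l) <
            ∑ j ∈ univ.erase k, ∑ l, pstar j l * Adiag H U V j k l := by
          apply Finset.sum_lt_sum
          · intro j _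
            exact Finset.sum_le_sum fun l _ =>
              mul_le_mul_of_nonneg_right (hp'le j l) (hA j k l).le
          · refine ⟨k0, hk0mem, ?_⟩
            have hk0T : k0 ∈ T := Finset.mem_filter.mpr ⟨mem_univ k0, hk0gt⟩
            have : (∑ l, p' k0 l * Adiag H U V k0 k l) =
                t * ∑ l, pstar k0 l * Adiag H U V k0 k l := by
              simp only [hp'def, if_pos hk0T, Finset.mul_sum, mul_assoc]
            rw [this]
            nlinarith
        linarith
      have h1 : Num pstar k / Den pstar k < Num pstar k / Den p' k :=
        div_lt_div_of_pos_left (hNumpos k) (hDenpos p' hp'nn k) hDenlt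
      have h2 : avgSINR H U V σsq pstar k / γ k < avgSINR H U V σsq p' k / γ k := by
        rw [hSINR, hSINR, hnum']
        exact (div_lt_div_iff_of_pos_right (hγ k)).mpr h1
      rw [hkeq] at h2
      exact h2
  have hfinal : m < univ.inf' hne (fun k => avgSINR H U V σsq p' k / γ k) :=
    (Finset.lt_inf'_iff hne).mpr fun k _ => hkey k
  exact absurd (hopt p' hp'nn hp'sum) (not_le.mpr hfinal)
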